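/- arXiv:1909.02057 — 2 statements merged into one kernel-verified Lean document; each statement's English description precedes it below -/
import Mathlib

section
/- For every n ≥ 3, the cycle graph C_n on n vertices has failed power domination number γ̄_p(C_n) = 0; that is, every nonempty subset of vertices of C_n is a power dominating set. -/
/-- The closed neighborhood `N[S]` of a set `S` of vertices: `S` together with
all vertices adjacent to a vertex of `S`. -/
def closedNbhdSet {V : Type*} (G : SimpleGraph V) (S : Set V) : Set V :=
  S ∪ {v | ∃ u ∈ S, G.Adj u v}

/-- The monitored sets `P^i(S)` for power domination:
`P^0(S) = N[S]` and
`P^{i+1}(S) = P^i(S) ∪ { w : {w} = N[v] \ P^i(S) for some v ∈ P^i(S) }`. -/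
def monitored {V : Type*} (G : SimpleGraph V) (S : Set V) : ℕ → Set V
  | 0 => closedNbhdSet G S
  | i + 1 => monitored G S i ∪
      {w | ∃ v ∈ monitored G S i,
        (insert v (G.neighborSet v)) \ monitored G S i = {w}}

/-- The zero-forcing sets `Q^i(S)`:
`Q^0(S) = S` and
`Q^{i+1}(S) = Q^i(S) ∪ { w : {w} = N[v] \ Q^i(S) for some v ∈ Q^i(S) }`. -/
def forced {V : Type*} (G : SimpleGraph V) (S : Set V) : ℕ → Set V
  | 0 => S
  | i + 1 => forced G S i ∪
      {w | ∃ v ∈ forced G S i,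
        (insert v (G.neighborSet v)) \ forced G S i = {w}}

/-- `S` is a power dominating set if the monitored sets eventually cover all vertices. -/
def IsPowerDominatingSet {V : Type*} (G : SimpleGraph V) (S : Set V) : Prop :=
  ∃ i, monitored G S i = Set.univ

/-- `S` is a zero forcing set if the forcing process eventually covers all vertices. -/
def IsZeroForcingSet {V : Type*} (G : SimpleGraph V) (S : Set V) : Prop :=
  ∃ i, forced G S i = Set.univ

/-- The failed power domination number: the maximum cardinality of a set of
vertices that is not a power dominating set. -/
noncomputable def failedPowerDominationNumber {V : Type*} (G : SimpleGraph V) : ℕ :=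
  sSup {k | ∃ S : Set V, ¬ IsPowerDominatingSet G S ∧ S.ncard = k}

/-- The failed zero forcing number: the maximum cardinality of a set of
vertices that is not a zero forcing set. -/
noncomputable def failedZeroForcingNumber {V : Type*} (G : SimpleGraph V) : ℕ :=
  sSup {k | ∃ S : Set V, ¬ IsZeroForcingSet G S ∧ S.ncard = k}

open Fin.CommRing in
open SimpleGraph in
lemma arc_lemma {m : ℕ} (S : Set (Fin (m+3))) (v : Fin (m+3)) (hv : v ∈ S) :
    ∀ i k : ℕ, k ≤ i + 1 → v + (k : Fin (m+3)) ∈ monitored (cycleGraph (m+3)) S i := by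
  intro i
  induction i with
  | zero =>
    intro k hk
    interval_cases k
    · exact Set.mem_union_left _ (by simpa using hv)
    · refine Set.mem_union_right _ ⟨v, hv, ?_⟩
      have : (cycleGraph (m+3)).Adj v (v + 1) := by
        rw [show (cycleGraph (m+3)).Adj v (v+1) ↔ _ from cycleGraph_adj (n := m+1)]
        right
        exact add_sub_cancel_left v 1
      simpa using this
  | succ i ih =>
    intro k hk
    rcases Nat.lt_or_ge k (i+2) with h | h
    · exact Set.mem_union_left _ (ih k (by omega))
    have hk2 : k = i + 2 := by omega
    subst hk2
    by_cases hmem : v + ((i+2 : ℕ) : Fin (m+3)) ∈ monitored (SimpleGraph.cycleGraph (m+3)) S i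
    · exact Set.mem_union_left _ hmem
    refine Set.mem_union_right _ ⟨v + ((i+1 : ℕ) : Fin (m+3)), ih (i+1) le_rfl, ?_⟩
    have hnb : (cycleGraph (m+3)).neighborSet (v + ((i+1:ℕ):Fin (m+3)))
        = {v + ((i+1:ℕ):Fin (m+3)) - 1, v + ((i+1:ℕ):Fin (m+3)) + 1} :=
      cycleGraph_neighborSet (n := m+1)
    have h1 : v + ((i+1:ℕ):Fin (m+3)) - 1 = v + ((i:ℕ):Fin (m+3)) := by push_cast; ring
    have h2 : v + ((i+1:ℕ):Fin (m+3)) + 1 = v + ((i+2:ℕ):Fin (m+3)) := by push_cast; ring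
    rw [hnb, h1, h2]
    ext x
    simp only [Set.mem_diff, Set.mem_insert_iff, Set.mem_singleton_iff]
    constructor
    · rintro ⟨(rfl | rfl | rfl), hx⟩
      · exact absurd (ih (i+1) le_rfl) hx
      · exact absurd (ih i (by omega)) hx
      · rfl
    · rintro rfl
      exact ⟨Or.inr (Or.inr rfl), hmem⟩

open Fin.CommRing in
lemma cycle_pds {m : ℕ} (S : Set (Fin (m+3))) (hS : S.Nonempty) :
    IsPowerDominatingSet (SimpleGraph.cycleGraph (m+3)) S := by
  obtain ⟨v, hv⟩ := hS
  refine ⟨m+3, ?_⟩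
  ext w
  simp only [Set.mem_univ, iff_true]
  have h := arc_lemma S v hv (m+3) ((w - v).val) (by have := (w - v).isLt; omega)
  have heq : v + (((w - v).val : ℕ) : Fin (m+3)) = w := by
    rw [Fin.cast_val_eq_self]; ring
  rwa [heq] at h

lemma monitored_empty {V : Type*} (G : SimpleGraph V) (i : ℕ) :
    monitored G ∅ i = ∅ := by
  induction i with
  | zero => simp [monitored, closedNbhdSet]
  | succ i ih => simp [monitored, ih]

theorem failedPowerDominationNumber_cycleGraph (n : ℕ) (hn : 3 ≤ n) :
    failedPowerDominationNumber (SimpleGraph.cycleGraph n) = 0 := by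
  obtain ⟨m, rfl⟩ : ∃ m, n = m + 3 := ⟨n - 3, by omega⟩
  have hset : {k | ∃ S : Set (Fin (m+3)),
      ¬ IsPowerDominatingSet (SimpleGraph.cycleGraph (m+3)) S ∧ S.ncard = k} = {0} := by
    ext k
    simp only [Set.mem_setOf_eq, Set.mem_singleton_iff]
    constructor
    · rintro ⟨S, hnp, rfl⟩
      rcases S.eq_empty_or_nonempty with rfl | hne
      · simp
      · exact absurd (cycle_pds S hne) hnp
    · rintro rfl
      refine ⟨∅, ?_, by simp⟩
      rintro ⟨i, hi⟩
      rw [monitored_empty] at hi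
      exact Set.empty_ne_univ hi
  rw [failedPowerDominationNumber, hset, csSup_singleton]
end

section
/- For every n ≥ 4, the wheel graph W_n on n vertices has failed power domination number γ̄_p(W_n) = 0; that is, every nonempty subset of vertices of W_n is a power dominating set. -/
/-- The join `G ∨ H` of two graphs: disjoint union plus all edges between the parts. -/
def joinGraph {α β : Type*} (G : SimpleGraph α) (H : SimpleGraph β) :
    SimpleGraph (α ⊕ β) where
  Adj x y :=
    match x, y with
    | Sum.inl a, Sum.inl b => G.Adj a b
    | Sum.inr a, Sum.inr b => H.Adj a b
    | Sum.inl _, Sum.inr _ => True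
    | Sum.inr _, Sum.inl _ => True
  symm := by
    constructor
    rintro (a | a) (b | b) h <;> simp_all [SimpleGraph.adj_comm]
  loopless := by
    constructor
    rintro (a | a) h
    · exact G.loopless.irrefl a h
    · exact H.loopless.irrefl a h


open SimpleGraph Sum
open scoped Fin.NatCast Fin.CommRing

lemma monitored_mono' {V : Type*} (G : SimpleGraph V) (S : Set V) {i j : ℕ} (h : i ≤ j) :
    monitored G S i ⊆ monitored G S j := by
  induction j with
  | zero => simp_all
  | succ k ih =>
    rcases Nat.lt_or_ge i (k+1) with h' | h'
    · exact (ih (by omega)).trans Set.subset_union_left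
    · have : i = k + 1 := by omega
      subst this; rfl

lemma wheel_pds (k : ℕ) (S : Set (Fin (k+3) ⊕ Fin 1)) (hS : S.Nonempty) :
    IsPowerDominatingSet (joinGraph (cycleGraph (k+3)) (⊤ : SimpleGraph (Fin 1))) S := by
  set G := joinGraph (cycleGraph (k+3)) (⊤ : SimpleGraph (Fin 1)) with hG
  obtain ⟨s, hs⟩ := hS
  have hadj_lr : ∀ (a : Fin (k+3)) (b : Fin 1), G.Adj (inl a) (inr b) := fun a b => trivial
  have hadj_rl : ∀ (a : Fin (k+3)) (b : Fin 1), G.Adj (inr b) (inl a) := fun a b => trivial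
  have hadj_ll : ∀ (a b : Fin (k+3)), G.Adj (inl a) (inl b) ↔ (cycleGraph (k+3)).Adj a b :=
    fun a b => Iff.rfl
  have hcadj : ∀ (u v : Fin (k+3)), (cycleGraph (k+3)).Adj u v ↔ u - v = 1 ∨ v - u = 1 :=
    fun u v => cycleGraph_adj (n := k+1)
  rcases s with a | b
  · -- a cycle vertex is in S
    have hhub : (inr 0 : Fin (k+3) ⊕ Fin 1) ∈ monitored G S 0 :=
      Or.inr ⟨inl a, hs, hadj_lr a 0⟩
    have ha0 : (inl a : Fin (k+3) ⊕ Fin 1) ∈ monitored G S 0 := Or.inl hs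
    have key : ∀ j : ℕ, inl (a + (j : Fin (k+3))) ∈ monitored G S j ∧
        inl (a + ((j+1 : ℕ) : Fin (k+3))) ∈ monitored G S j := by
      intro j
      induction j with
      | zero =>
        refine ⟨by simpa using ha0, ?_⟩
        refine Or.inr ⟨inl a, hs, ?_⟩
        rw [hadj_ll, hcadj]
        right; push_cast; ring
      | succ j ih =>
        obtain ⟨ih1, ih2⟩ := ih
        have mono := monitored_mono' G S (Nat.le_succ j)
        refine ⟨mono ih2, ?_⟩
        by_cases hin : inl (a + ((j+2 : ℕ) : Fin (k+3))) ∈ monitored G S j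
        · exact mono hin
        · refine Or.inr ⟨inl (a + ((j+1 : ℕ) : Fin (k+3))), ih2, ?_⟩
          ext x
          simp only [Set.mem_diff, Set.mem_insert_iff, Set.mem_singleton_iff]
          constructor
          · rintro ⟨hx1, hx2⟩
            rcases hx1 with rfl | hx1
            · exact absurd ih2 hx2
            · rcases x with c | b
              · rw [SimpleGraph.mem_neighborSet, hadj_ll, hcadj] at hx1
                rcases hx1 with h1 | h1
                · have hc : c = a + (j : Fin (k+3)) := by
                    push_cast at h1 ⊢; linear_combination -h1
                  subst hc
                  exact absurd ih1 hx2
                · have hc : c = a + ((j+2 : ℕ) : Fin (k+3)) := by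
                    push_cast at h1 ⊢; linear_combination h1
                  rw [hc]
              · have : b = 0 := Subsingleton.elim b 0
                subst this
                exact absurd (monitored_mono' G S (Nat.zero_le j) hhub) hx2
          · rintro rfl
            refine ⟨Or.inr ?_, hin⟩
            rw [SimpleGraph.mem_neighborSet, hadj_ll, hcadj]
            right; push_cast; ring
    refine ⟨k+3, ?_⟩
    ext x
    simp only [Set.mem_univ, iff_true]
    rcases x with c | b
    · set j := (c - a - 1).val with hj
      have hc : c = a + ((j+1 : ℕ) : Fin (k+3)) := by
        push_cast
        rw [hj, Fin.cast_val_eq_self]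
        ring
      have hjle : j ≤ k + 2 := by have := (c - a - 1).isLt; omega
      rw [hc]
      exact monitored_mono' G S (by omega) (key j).2
    · have : b = 0 := Subsingleton.elim b 0
      subst this
      exact monitored_mono' G S (Nat.zero_le _) hhub
  · have : b = 0 := Subsingleton.elim b 0
    subst this
    refine ⟨0, ?_⟩
    ext x
    simp only [Set.mem_univ, iff_true]
    rcases x with c | b
    · exact Or.inr ⟨inr 0, hs, hadj_rl c 0⟩
    · have : b = 0 := Subsingleton.elim b 0
      subst this; exact Or.inl hs

theorem failedPowerDominationNumber_wheel (n : ℕ) (hn : 4 ≤ n) :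
    failedPowerDominationNumber
      (joinGraph (SimpleGraph.cycleGraph (n - 1)) (⊤ : SimpleGraph (Fin 1))) = 0 := by
  obtain ⟨k, hk⟩ : ∃ k, n - 1 = k + 3 := ⟨n - 4, by omega⟩
  rw [hk]
  have hsub : {m | ∃ S : Set (Fin (k+3) ⊕ Fin 1),
      ¬ IsPowerDominatingSet (joinGraph (cycleGraph (k+3)) (⊤ : SimpleGraph (Fin 1))) S ∧
      S.ncard = m} ⊆ {0} := by
    rintro m ⟨S, hnp, rfl⟩
    rcases S.eq_empty_or_nonempty with rfl | hne
    · simp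
    · exact absurd (wheel_pds k S hne) hnp
  have hle : failedPowerDominationNumber
      (joinGraph (cycleGraph (k+3)) (⊤ : SimpleGraph (Fin 1))) ≤ 0 :=
    csSup_le' (fun m hm => by simpa using hsub hm)
  omega
end
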